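/- Let w be a string that is not primitive, i.e. w = z^k for some string z and some integer k ≥ 2, and suppose w = uv where u and v are palindromes with v ≠ ε. Then there exist two distinct pairs (u₁, v₁) ≠ (u₂, v₂), where u₁, v₁, u₂, v₂ are palindromes with v₁ ≠ ε and v₂ ≠ ε, such that w = u₁v₁ = u₂v₂. -/

import Mathlib

/-- `w = z^k`: concatenation of `k` copies of `z`. -/
def listPow {α : Type*} (z : List α) (k : ℕ) : List α := (List.replicate k z).flatten

/-- A positive integer `p` is a period of `w` if `w[i] = w[i+p]` whenever both positions
are inside `w` (0-indexed). -/
def HasPeriod {α : Type*} (w : List α) (p : ℕ) : Prop :=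
  0 < p ∧ ∀ i : ℕ, i + p < w.length → w[i]? = w[i + p]?

namespace Stmt4Aux

variable {α : Type*}

def Pal (l : List α) : Prop := ∀ i j : ℕ, i + j + 1 = l.length → l[i]? = l[j]?

lemma pal_iff_rev (l : List α) : l.reverse = l ↔ Pal l := by
  constructor
  · intro h i j hij
    have hi : i < l.length := by omega
    have := List.getElem?_reverse hi
    rw [h] at this
    rw [this]
    congr 1
    omega
  · intro h
    apply List.ext_getElem?
    intro n
    by_cases hn : n < l.length
    · rw [List.getElem?_reverse hn]
      exact (h _ _ (by omega)).symm
    · rw [List.getElem?_eq_none (by simp only [List.length_reverse]; omega),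
        List.getElem?_eq_none (by omega)]

lemma iter (w : List α) (p : ℕ)
    (hper : ∀ i, i + p < w.length → w[i]? = w[i + p]?) :
    ∀ t i, i + t * p < w.length → w[i]? = w[i + t * p]? := by
  intro t
  induction t with
  | zero => intro i _; simp
  | succ t ih =>
    intro i h
    have hmul : (t + 1) * p = t * p + p := by ring
    rw [hmul] at h
    have h1 : i + p < w.length := by omega
    have h2 : (i + p) + t * p < w.length := by omega
    rw [hper i h1, ih (i + p) h2]
    congr 1
    omega

lemma key (w : List α) (p c m : ℕ) (hp : 0 < p)
    (hper : ∀ i, i + p < w.length → w[i]? = w[i + p]?)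
    (hlen : w.length = m * p)
    (hc : c + p ≤ w.length)
    (hu : ∀ i j, i + j + 1 = c → w[i]? = w[j]?)
    (hv : ∀ a b, c ≤ a → c ≤ b → a + b + 1 = w.length + c → w[a]? = w[b]?) :
    (∀ i j, i + j + 1 = c + p → w[i]? = w[j]?) ∧
    (∀ a b, c + p ≤ a → c + p ≤ b → a + b + 1 = w.length + (c + p) → w[a]? = w[b]?) := by
  have hm : 1 ≤ m := by
    rcases Nat.eq_zero_or_pos m with rfl | h
    · rw [Nat.zero_mul] at hlen; omega
    · exact h
  have hmp : (m - 1) * p = m * p - p := Nat.sub_one_mul m p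
  have hstep : ∀ i j, i + j + 1 = c + p → i < c → w[i]? = w[j]? := by
    intro i j hij hi
    have hj : j = (c - 1 - i) + p := by omega
    have h1 : w[i]? = w[c - 1 - i]? := hu i (c - 1 - i) (by omega)
    have h2 : w[c - 1 - i]? = w[(c - 1 - i) + p]? := hper _ (by omega)
    rw [h1, h2, ← hj]
  constructor
  · intro i j hij
    by_cases hi : i < c
    · exact hstep i j hij hi
    by_cases hj : j < c
    · exact (hstep j i (by omega) hj).symm
    push_neg at hi hj
    have hb : w[i]? = w[w.length + c - 1 - i]? :=
      hv i (w.length + c - 1 - i) hi (by omega) (by omega)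
    have heq : j + (m - 1) * p = w.length + c - 1 - i := by omega
    have hjit : w[j]? = w[j + (m - 1) * p]? := by
      apply iter w p hper
      omega
    rw [hjit, heq, hb]
  · intro a b ha hb hab
    have h1 : w[a]? = w[w.length + c - 1 - a]? :=
      hv a (w.length + c - 1 - a) (by omega) (by omega) (by omega)
    have h2 : w[w.length + c - 1 - a]? = w[(w.length + c - 1 - a) + p]? := hper _ (by omega)
    have h3 : (w.length + c - 1 - a) + p = b := by omega
    rw [h1, h2, h3]

lemma pal_take (w : List α) (c : ℕ) (hc : c ≤ w.length) :
    Pal (w.take c) ↔ ∀ i j, i + j + 1 = c → w[i]? = w[j]? := by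
  unfold Pal
  simp only [List.length_take, Nat.min_eq_left hc, List.getElem?_take]
  constructor
  · intro h i j hij
    have := h i j hij
    rw [if_pos (by omega), if_pos (by omega)] at this
    exact this
  · intro h i j hij
    rw [if_pos (by omega), if_pos (by omega)]
    exact h i j hij

lemma pal_drop (w : List α) (c : ℕ) (hc : c ≤ w.length) :
    Pal (w.drop c) ↔ ∀ a b, c ≤ a → c ≤ b → a + b + 1 = w.length + c → w[a]? = w[b]? := by
  unfold Pal
  simp only [List.length_drop, List.getElem?_drop]
  constructor
  · intro h a b ha hb hab
    have := h (a - c) (b - c) (by omega)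
    rw [Nat.add_sub_cancel' ha, Nat.add_sub_cancel' hb] at this
    exact this
  · intro h i j hij
    exact h (c + i) (c + j) (by omega) (by omega) (by omega)

lemma listPow_succ (z : List α) (k : ℕ) : listPow z (k + 1) = z ++ listPow z k := by
  simp [listPow, List.replicate_succ]

lemma listPow_succ' (z : List α) (k : ℕ) : listPow z (k + 1) = listPow z k ++ z := by
  simp [listPow, List.replicate_succ', List.flatten_append]

lemma listPow_length (z : List α) (k : ℕ) : (listPow z k).length = k * z.length := by
  induction k with
  | zero => simp [listPow]
  | succ k ih => rw [listPow_succ, List.length_append, ih]; ring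

lemma listPow_reverse (z : List α) (k : ℕ) :
    (listPow z k).reverse = listPow z.reverse k := by
  induction k with
  | zero => simp [listPow]
  | succ k ih => rw [listPow_succ, listPow_succ', List.reverse_append, ih]

lemma listPow_hasPeriod (z : List α) (k : ℕ) (hk : 1 ≤ k) :
    ∀ i, i + z.length < (listPow z k).length →
      (listPow z k)[i]? = (listPow z k)[i + z.length]? := by
  obtain ⟨k', rfl⟩ : ∃ k', k = k' + 1 := ⟨k - 1, by omega⟩
  intro i hi
  have hlen : (listPow z k').length = k' * z.length := listPow_length z k'
  have hlen' : (listPow z (k' + 1)).length = (k' + 1) * z.length := listPow_length z (k' + 1)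
  have hmul : (k' + 1) * z.length = k' * z.length + z.length := by ring
  have h1 : (listPow z (k' + 1))[i]? = (listPow z k')[i]? := by
    rw [listPow_succ']
    rw [List.getElem?_append_left (by omega)]
  have h2 : (listPow z (k' + 1))[i + z.length]? = (listPow z k')[i]? := by
    rw [listPow_succ]
    rw [List.getElem?_append_right (by omega : z.length ≤ i + z.length)]
    congr 1
    omega
  rw [h1, h2]

end Stmt4Aux

open Stmt4Aux in
/-- A non-primitive palindromic pair admits two distinct decompositions into two palindromes
(the second one nonempty). -/
theorem stmt_4 {α : Type*} (w z u v : List α) (k : ℕ) (hk : 2 ≤ k) (hzk : w = listPow z k)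
    (huv : w = u ++ v) (hu : u.reverse = u) (hv : v.reverse = v) (hvne : v ≠ []) :
    ∃ u₁ v₁ u₂ v₂ : List α, (u₁, v₁) ≠ (u₂, v₂) ∧
      u₁.reverse = u₁ ∧ v₁.reverse = v₁ ∧ v₁ ≠ [] ∧
      u₂.reverse = u₂ ∧ v₂.reverse = v₂ ∧ v₂ ≠ [] ∧
      w = u₁ ++ v₁ ∧ w = u₂ ++ v₂ := by
  have hnlen : w.length = k * z.length := by rw [hzk, listPow_length]
  have h2z : 2 * z.length ≤ k * z.length := Nat.mul_le_mul_right _ hk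
  have hvpos : 0 < v.length := List.length_pos_iff.mpr hvne
  have hnc : w.length = u.length + v.length := by rw [huv]; simp
  have hp : 0 < z.length := by
    rcases Nat.eq_zero_or_pos z.length with h | h
    · rw [h, Nat.mul_zero] at hnlen; omega
    · exact h
  have hutake : u = w.take u.length := by rw [huv, List.take_left]
  have hvdrop : v = w.drop u.length := by rw [huv]; simp
  have hper : ∀ i, i + z.length < w.length → w[i]? = w[i + z.length]? := by
    rw [hzk]
    exact listPow_hasPeriod z k (by omega)
  have hcn : u.length ≤ w.length := by omega
  have hPu : ∀ i j, i + j + 1 = u.length → w[i]? = w[j]? :=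
    (pal_take w u.length hcn).mp ((pal_iff_rev _).mp (by rw [← hutake]; exact hu))
  have hPv : ∀ a b, u.length ≤ a → u.length ≤ b → a + b + 1 = w.length + u.length →
      w[a]? = w[b]? :=
    (pal_drop w u.length hcn).mp ((pal_iff_rev _).mp (by rw [← hvdrop]; exact hv))
  by_cases hcase : u.length + z.length < w.length
  · -- shift the cut to the right by one period
    obtain ⟨h1, h2⟩ := key w z.length u.length k hp hper hnlen (by omega) hPu hPv
    refine ⟨u, v, w.take (u.length + z.length), w.drop (u.length + z.length), ?_, hu, hv, hvne,
      ?_, ?_, ?_, huv, (List.take_append_drop _ _).symm⟩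
    · intro h
      have h2' : v = w.drop (u.length + z.length) := congrArg Prod.snd h
      have := congrArg List.length h2'
      rw [List.length_drop] at this
      omega
    · exact (pal_iff_rev _).mpr ((pal_take w (u.length + z.length) (by omega)).mpr h1)
    · exact (pal_iff_rev _).mpr ((pal_drop w (u.length + z.length) (by omega)).mpr h2)
    · intro h
      have := congrArg List.length h
      rw [List.length_drop] at this
      simp at this
      omega
  · -- shift the cut to the left by one period, working on the reversed word
    have hcp : z.length ≤ u.length := by omega
    have hWlen : w.reverse.length = w.length := by simp
    have hWper : ∀ i, i + z.length < w.reverse.length →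
        w.reverse[i]? = w.reverse[i + z.length]? := by
      have h := listPow_hasPeriod z.reverse k (by omega)
      rw [← listPow_reverse, ← hzk] at h
      simp only [List.length_reverse] at h
      intro i hi
      exact h i (by simpa using hi)
    have hWvu : w.reverse = v ++ u := by rw [huv, List.reverse_append, hu, hv]
    have hvtake : v = w.reverse.take v.length := by rw [hWvu, List.take_left]
    have hudrop : u = w.reverse.drop v.length := by rw [hWvu]; simp
    have hc'n : v.length ≤ w.reverse.length := by omega
    have hPv' : ∀ i j, i + j + 1 = v.length → w.reverse[i]? = w.reverse[j]? :=
      (pal_take _ v.length hc'n).mp ((pal_iff_rev _).mp (by rw [← hvtake]; exact hv))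
    have hPu' : ∀ a b, v.length ≤ a → v.length ≤ b →
        a + b + 1 = w.reverse.length + v.length → w.reverse[a]? = w.reverse[b]? :=
      (pal_drop _ v.length hc'n).mp ((pal_iff_rev _).mp (by rw [← hudrop]; exact hu))
    obtain ⟨h1, h2⟩ := key w.reverse z.length v.length k hp hWper (by omega) (by omega) hPv' hPu'
    have hApal : (w.reverse.take (v.length + z.length)).reverse
        = w.reverse.take (v.length + z.length) :=
      (pal_iff_rev _).mpr ((pal_take _ (v.length + z.length) (by omega)).mpr h1)
    have hBpal : (w.reverse.drop (v.length + z.length)).reverse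
        = w.reverse.drop (v.length + z.length) :=
      (pal_iff_rev _).mpr ((pal_drop _ (v.length + z.length) (by omega)).mpr h2)
    have hwBA : w = w.reverse.drop (v.length + z.length)
        ++ w.reverse.take (v.length + z.length) := by
      conv_lhs => rw [← List.reverse_reverse w,
        ← List.take_append_drop (v.length + z.length) w.reverse]
      rw [List.reverse_append, hApal, hBpal]
    refine ⟨u, v, w.reverse.drop (v.length + z.length), w.reverse.take (v.length + z.length),
      ?_, hu, hv, hvne, hBpal, hApal, ?_, huv, hwBA⟩
    · intro h
      have h2' : v = w.reverse.take (v.length + z.length) := congrArg Prod.snd h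
      have := congrArg List.length h2'
      rw [List.length_take] at this
      omega
    · apply List.ne_nil_of_length_pos
      rw [List.length_take]
      omega
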